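/- Let θ be a normal element of F_{q^n} over F_q (so that {θ, θ^q, ..., θ^{q^{n-1}}} is a basis), and let c = Tr_{F_{q^n}/F_q}(θ). Then c ≠ 0 and {1, θ, θ^q, ..., θ^{q^{n-2}}} is a basis of F_{q^n} over F_q. -/

import Mathlib

set_option maxHeartbeats 1000000 in
theorem stmt_2 (q n : ℕ) (hq : IsPrimePow q) (hn : 0 < n)
    (F E : Type*) [Field F] [Fintype F] [Field E] [Fintype E] [Algebra F E]
    (hF : Fintype.card F = q) (hE : Fintype.card E = q ^ n)
    (θ : E) (hθ : ∃ b : Module.Basis (Fin n) F E, ∀ i : Fin n, b i = θ ^ q ^ (i : ℕ))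
    (c : E) (hc : c = ∑ i ∈ Finset.range n, θ ^ q ^ i) :
    c ≠ 0 ∧ ∃ b : Module.Basis (Fin n) F E,
      ∀ i : Fin n, b i = if (i : ℕ) = 0 then 1 else θ ^ q ^ ((i : ℕ) - 1) := by
  classical
  obtain ⟨b, hb⟩ := hθ
  haveI : NeZero n := ⟨hn.ne'⟩
  obtain ⟨p, k, hp, hk, hpk⟩ := hq
  have hp' : p.Prime := Nat.prime_iff.mpr hp
  haveI : Fact p.Prime := ⟨hp'⟩
  -- arithmetic of Fin n successor
  have hadd1 : ∀ j : Fin n, ((j + 1 : Fin n) : ℕ) = ((j : ℕ) + 1) % n := by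
    intro j
    rw [Fin.val_add, Fin.val_one']
    conv_lhs => rw [Nat.add_mod]
    conv_rhs => rw [Nat.add_mod]
    rw [Nat.mod_mod_of_dvd 1 dvd_rfl]
  have hadd1' : ∀ j : Fin n, (j : ℕ) + 1 < n → ((j + 1 : Fin n) : ℕ) = (j : ℕ) + 1 :=
    fun j h => by rw [hadd1, Nat.mod_eq_of_lt h]
  have hL0 : ∀ j : Fin n, (j : ℕ) + 1 = n → ((j + 1 : Fin n) : ℕ) = 0 :=
    fun j h => by rw [hadd1, h, Nat.mod_self]
  -- characteristic of E is p
  have hrp : (ringChar E).Prime := CharP.char_is_prime E (ringChar E)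
  obtain ⟨m, -, hcard⟩ := FiniteField.card E (ringChar E)
  have hpr : p = ringChar E := by
    have h1 : p ∣ Fintype.card E := by
      rw [hE, ← hpk, ← pow_mul]
      exact dvd_pow_self p (by positivity)
    rw [hcard] at h1
    exact (Nat.prime_dvd_prime_iff_eq hp' hrp).mp (hp'.dvd_of_dvd_pow h1)
  haveI hPE : CharP E p := hpr ▸ ringChar.charP E
  have hphi : ∀ x : E, x ^ q = iterateFrobenius E p k x := fun x => by
    rw [iterateFrobenius_def, hpk]
  have hEq : ∀ x : E, x ^ q ^ n = x := fun x => hE ▸ FiniteField.pow_card x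
  have hFq : ∀ a : F, a ^ q = a := fun a => hF ▸ FiniteField.pow_card a
  -- b i ^ q = b (i + 1)
  have hbq : ∀ i : Fin n, (b i) ^ q = b (i + 1) := by
    intro i
    rw [hb, hb, ← pow_mul, ← pow_succ]
    rcases Nat.lt_or_ge ((i : ℕ) + 1) n with h | h
    · rw [hadd1' i h]
    · have h' : (i : ℕ) + 1 = n := le_antisymm i.isLt h
      rw [hL0 i h', h', hEq θ, pow_zero, pow_one]
  -- coordinates of 1 are shift-invariant
  set a : Fin n → F := fun j => b.repr 1 j with ha
  have h1 : (1 : E) = ∑ j : Fin n, a (j - 1) • b j := by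
    calc (1 : E) = (1 : E) ^ q := (one_pow q).symm
      _ = (∑ i : Fin n, a i • b i) ^ q := by rw [b.sum_repr 1]
      _ = ∑ i : Fin n, (a i • b i) ^ q := by
          rw [hphi, map_sum]
          exact Finset.sum_congr rfl fun i _ => (hphi _).symm
      _ = ∑ i : Fin n, a i • b (i + 1) := by
          refine Finset.sum_congr rfl fun i _ => ?_
          rw [smul_pow, hFq, hbq]
      _ = ∑ j : Fin n, a (j - 1) • b j := by
          refine Fintype.sum_equiv (Equiv.addRight (1 : Fin n)) _ _ fun i => ?_
          simp
  have hshift : ∀ j : Fin n, a j = a (j - 1) := by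
    intro j
    have h2 := congrArg (fun x => b.repr x j) h1
    simpa [map_sum, Finsupp.single_apply, ha] using h2
  have hshift' : ∀ j : Fin n, a (j + 1) = a j := fun j => by
    simpa using hshift (j + 1)
  have hconst : ∀ j : Fin n, a j = a 0 := by
    rintro ⟨m, hm⟩
    induction m with
    | zero => congr 1
    | succ m ih =>
      have hm' : m < n := Nat.lt_of_succ_lt hm
      have he : (⟨m + 1, hm⟩ : Fin n) = ⟨m, hm'⟩ + 1 :=
        Fin.ext (hadd1' ⟨m, hm'⟩ hm).symm
      rw [he, hshift' ⟨m, hm'⟩, ih hm']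
  have hcb : c = ∑ i : Fin n, b i := by
    rw [hc, ← Fin.sum_univ_eq_sum_range (fun i => θ ^ q ^ i) n]
    exact Finset.sum_congr rfl fun i _ => (hb i).symm
  have hone : a 0 • c = 1 := by
    rw [hcb, Finset.smul_sum]
    calc ∑ i : Fin n, a 0 • b i = ∑ i : Fin n, a i • b i :=
          Finset.sum_congr rfl fun i _ => by rw [hconst i]
      _ = 1 := b.sum_repr 1
  have ha0 : a 0 ≠ 0 := by
    intro h
    rw [h, zero_smul] at hone
    exact one_ne_zero hone.symm
  have hcne : c ≠ 0 := by
    intro h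
    rw [h, smul_zero] at hone
    exact one_ne_zero hone.symm
  refine ⟨hcne, ?_⟩
  set v : Fin n → E := fun i => if (i : ℕ) = 0 then 1 else θ ^ q ^ ((i : ℕ) - 1) with hv
  have hv0 : v 0 = 1 := by simp [hv]
  have li : LinearIndependent F v := by
    rw [Fintype.linearIndependent_iff]
    intro g hg
    set L : Fin n := ⟨n - 1, by omega⟩ with hL
    have hLval : (L : ℕ) = n - 1 := rfl
    have hL1 : L + 1 = 0 := by
      apply Fin.ext
      rw [hL0 L (by simp [hLval]; omega)]
      rfl
    set w : Fin n → F := fun j =>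
      if hj : (j : ℕ) = n - 1 then 0
      else g ⟨(j : ℕ) + 1, by have := j.isLt; omega⟩ with hw
    have key : ∑ j : Fin n, (g 0 * a 0 + w j) • b j = 0 := by
      have e1 : ∑ j : Fin n, (g 0 * a 0 + w j) • b j
          = (∑ j : Fin n, (g 0 * a 0) • b j) + ∑ j : Fin n, w j • b j := by
        rw [← Finset.sum_add_distrib]
        exact Finset.sum_congr rfl fun j _ => add_smul _ _ _
      have e2 : (∑ j : Fin n, (g 0 * a 0) • b j) = g 0 • v 0 := by
        calc ∑ j : Fin n, (g 0 * a 0) • b j = (g 0 * a 0) • ∑ j : Fin n, b j :=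
              Finset.smul_sum.symm
          _ = g 0 • (a 0 • c) := by rw [← hcb, mul_smul]
          _ = g 0 • v 0 := by rw [hone, hv0]
      have e3 : ∑ j : Fin n, w j • b j = ∑ i ∈ Finset.univ.erase 0, g i • v i := by
        have hwL : w L = 0 := by simp [hw, hLval]
        have e4 : ∑ j ∈ Finset.univ.erase L, w j • b j = ∑ j : Fin n, w j • b j :=
          Finset.sum_erase Finset.univ (by rw [hwL, zero_smul])
        rw [← e4]
        refine Finset.sum_nbij' (fun j => j + 1) (fun i => i - 1) ?_ ?_ ?_ ?_ ?_
        · intro j hj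
          have hjne : (j : ℕ) ≠ n - 1 := fun hc => (Finset.mem_erase.mp hj).1 (Fin.ext hc)
          refine Finset.mem_erase.mpr ⟨?_, Finset.mem_univ _⟩
          intro hz
          have hz' : j + 1 = 0 := hz
          have hval := hadd1' j (by have := j.isLt; omega)
          rw [hz'] at hval
          simp at hval
        · intro i hi
          refine Finset.mem_erase.mpr ⟨?_, Finset.mem_univ _⟩
          intro hz
          have hz' : i - 1 = L := hz
          exact (Finset.mem_erase.mp hi).1 (by rw [← sub_add_cancel i 1, hz', hL1])
        · intro j _; exact add_sub_cancel_right j 1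
        · intro i _; exact sub_add_cancel i 1
        · intro j hj
          have hjne : (j : ℕ) ≠ n - 1 := fun hc => (Finset.mem_erase.mp hj).1 (Fin.ext hc)
          have hlt : (j : ℕ) + 1 < n := by have := j.isLt; omega
          have hval : ((j + 1 : Fin n) : ℕ) = (j : ℕ) + 1 := hadd1' j hlt
          have hwj : w j = g (j + 1) := by
            simp only [hw]
            rw [dif_neg hjne]
            congr 1
            exact Fin.ext (by rw [hval])
          have hvj : v (j + 1) = b j := by
            simp only [hv, hval, Nat.add_sub_cancel]
            rw [if_neg (Nat.succ_ne_zero (j : ℕ)), hb]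
          show w j • b j = g (j + 1) • v (j + 1)
          rw [hwj, hvj]
      rw [e1, e2, e3, ← hg]
      exact Finset.add_sum_erase Finset.univ (fun i => g i • v i) (Finset.mem_univ 0)
    have hz := Fintype.linearIndependent_iff.mp b.linearIndependent
      (fun j => g 0 * a 0 + w j) key
    have hg0 : g 0 = 0 := by
      have hzL : g 0 * a 0 + w L = 0 := hz L
      have : w L = 0 := by simp [hw, hLval]
      rw [this, add_zero] at hzL
      rcases mul_eq_zero.mp hzL with h' | h'
      · exact h'
      · exact absurd h' ha0
    intro i
    by_cases hi : (i : ℕ) = 0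
    · have : i = 0 := Fin.ext hi
      rw [this, hg0]
    · have hi1 : 1 ≤ (i : ℕ) := Nat.one_le_iff_ne_zero.mpr hi
      have hilt := i.isLt
      have hjlt : (i : ℕ) - 1 < n := by omega
      have hzj : g 0 * a 0 + w ⟨(i : ℕ) - 1, hjlt⟩ = 0 := hz ⟨(i : ℕ) - 1, hjlt⟩
      have hjne : ((⟨(i : ℕ) - 1, hjlt⟩ : Fin n) : ℕ) ≠ n - 1 := by
        simp only [Fin.val_mk]
        omega
      have hwj : w ⟨(i : ℕ) - 1, hjlt⟩ = g i := by
        simp only [hw]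
        rw [dif_neg hjne]
        congr 1
        apply Fin.ext
        simp only [Fin.val_mk]
        omega
      rw [hwj, hg0, zero_mul, zero_add] at hzj
      exact hzj
  haveI : FiniteDimensional F E := Module.Finite.of_basis b
  haveI : Nonempty (Fin n) := ⟨0⟩
  have hfr : Fintype.card (Fin n) = Module.finrank F E := by
    rw [Module.finrank_eq_card_basis b]
  exact ⟨basisOfLinearIndependentOfCardEqFinrank li hfr, fun i =>
    congrFun (coe_basisOfLinearIndependentOfCardEqFinrank li hfr) i⟩
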